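/- For any random variable X, min(F_X^{-1}(z), 0) = F_{-X^-}^{-1}(z) for all z in (0,1), where X^- = max(-X, 0) is the negative part of X. -/

import Mathlib

open MeasureTheory

variable {Ω : Type*} [MeasurableSpace Ω]

/-- The cumulative distribution function of `X` under `μ`. -/
noncomputable def cdf (μ : Measure Ω) (X : Ω → ℝ) (x : ℝ) : ℝ :=
  (μ {ω | X ω ≤ x}).toReal

/-- The left-continuous quantile function `F_X^{-1}(t) = inf {x : F_X(x) ≥ t}`. -/
noncomputable def qL (μ : Measure Ω) (X : Ω → ℝ) (t : ℝ) : ℝ :=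
  sInf {x : ℝ | t ≤ cdf μ X x}

lemma cdf_eq_prob_cdf (μ : Measure Ω) [IsProbabilityMeasure μ] {X : Ω → ℝ} (hX : Measurable X) :
    cdf μ X = ProbabilityTheory.cdf (μ.map X) := by
  have : IsProbabilityMeasure (μ.map X) := Measure.isProbabilityMeasure_map hX.aemeasurable
  funext x
  rw [ProbabilityTheory.cdf_eq_real, measureReal_def, Measure.map_apply hX measurableSet_Iic]
  rfl

lemma cdf_mono (μ : Measure Ω) [IsFiniteMeasure μ] (X : Ω → ℝ) : Monotone (cdf μ X) := by
  intro a b hab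
  exact ENNReal.toReal_mono (measure_ne_top μ _)
    (measure_mono (fun ω h => le_trans h hab))

lemma bddBelow_qL_set (μ : Measure Ω) [IsProbabilityMeasure μ] {X : Ω → ℝ}
    (hX : Measurable X) {z : ℝ} (hz : 0 < z) :
    BddBelow {x : ℝ | z ≤ cdf μ X x} := by
  have hpm : IsProbabilityMeasure (μ.map X) := Measure.isProbabilityMeasure_map hX.aemeasurable
  have h := ProbabilityTheory.tendsto_cdf_atBot (μ.map X)
  rw [← cdf_eq_prob_cdf μ hX] at h
  have : ∀ᶠ x in Filter.atBot, cdf μ X x < z :=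
    h.eventually (Filter.Tendsto.eventually_lt_const hz Filter.tendsto_id)
  obtain ⟨x₀, hx₀⟩ := this.exists
  exact ⟨x₀, fun y hy => by
    by_contra hlt
    push_neg at hlt
    exact absurd (le_trans hy (cdf_mono μ X hlt.le)) (not_le.mpr hx₀)⟩

lemma nonempty_qL_set (μ : Measure Ω) [IsProbabilityMeasure μ] {X : Ω → ℝ}
    (hX : Measurable X) {z : ℝ} (hz : z < 1) :
    Set.Nonempty {x : ℝ | z ≤ cdf μ X x} := by
  have hpm : IsProbabilityMeasure (μ.map X) := Measure.isProbabilityMeasure_map hX.aemeasurable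
  have h := ProbabilityTheory.tendsto_cdf_atTop (μ.map X)
  rw [← cdf_eq_prob_cdf μ hX] at h
  have : ∀ᶠ x in Filter.atTop, z < cdf μ X x :=
    h.eventually (Filter.Tendsto.eventually_const_lt hz Filter.tendsto_id)
  obtain ⟨x₀, hx₀⟩ := this.exists
  exact ⟨x₀, hx₀.le⟩

/-- `min(F_X^{-1}(z), 0) = F_{-X⁻}^{-1}(z)` for `z ∈ (0,1)`, where `X⁻ = max(-X, 0)`. -/
theorem stmt_4 (μ : Measure Ω) [IsProbabilityMeasure μ] (X : Ω → ℝ) (hX : Measurable X)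
    (z : ℝ) (hz : z ∈ Set.Ioo (0 : ℝ) 1) :
    min (qL μ X z) 0 = qL μ (fun ω => -(max (-(X ω)) 0)) z := by
  obtain ⟨hz0, hz1⟩ := hz
  set Y : Ω → ℝ := fun ω => -(max (-(X ω)) 0) with hYdef
  have hYmin : ∀ ω, Y ω = min (X ω) 0 := by
    intro ω
    simp only [hYdef]
    rw [← neg_zero, max_neg_neg, neg_neg, neg_zero]
  have hYmeas : Measurable Y := (hX.neg.max measurable_const).neg
  -- cdf of Y equals cdf of X on negative reals
  have hcdf_neg : ∀ x : ℝ, x < 0 → cdf μ Y x = cdf μ X x := by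
    intro x hx
    unfold cdf
    congr 1
    apply congrArg
    ext ω
    simp only [Set.mem_setOf_eq, hYmin ω, min_le_iff]
    constructor
    · rintro (h | h)
      · exact h
      · linarith
    · exact Or.inl
  have hcdf_nonneg : ∀ x : ℝ, 0 ≤ x → cdf μ Y x = 1 := by
    intro x hx
    unfold cdf
    have : {ω | Y ω ≤ x} = Set.univ := by
      ext ω
      simp only [Set.mem_setOf_eq, Set.mem_univ, iff_true, hYmin ω]
      exact le_trans (min_le_right _ _) hx
    rw [this, measure_univ, ENNReal.toReal_one]
  set SX := {x : ℝ | z ≤ cdf μ X x}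
  set SY := {x : ℝ | z ≤ cdf μ Y x}
  have hSXbdd : BddBelow SX := bddBelow_qL_set μ hX hz0
  have hSXne : SX.Nonempty := nonempty_qL_set μ hX hz1
  have hSYbdd : BddBelow SY := bddBelow_qL_set μ hYmeas hz0
  have h0Y : (0 : ℝ) ∈ SY := by
    simp only [SY, Set.mem_setOf_eq, hcdf_nonneg 0 le_rfl]
    exact hz1.le
  have hb0 : qL μ Y z ≤ 0 := csInf_le hSYbdd h0Y
  apply le_antisymm
  · -- min a 0 ≤ b : min a 0 is a lower bound of SY
    apply le_csInf ⟨0, h0Y⟩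
    intro x hx
    rcases lt_or_ge x 0 with hxneg | hxpos
    · have : x ∈ SX := by
        simp only [SX, Set.mem_setOf_eq, ← hcdf_neg x hxneg]
        exact hx
      exact le_trans (min_le_left _ _) (csInf_le hSXbdd this)
    · exact le_trans (min_le_right _ _) hxpos
  · -- b ≤ min a 0
    apply le_min _ hb0
    apply le_csInf hSXne
    intro x hx
    rcases lt_or_ge x 0 with hxneg | hxpos
    · have : x ∈ SY := by
        simp only [SY, Set.mem_setOf_eq, hcdf_neg x hxneg]
        exact hx
      exact csInf_le hSYbdd this
    · exact le_trans hb0 hxpos
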